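/- The Mahler measure of the four-variable polynomial u_1 − u_1u_3 − u_1u_4 − u_2u_3 + u_3u_4 + u_1u_2u_3 equals the Mahler measure of the four-variable Laurent polynomial 1 + v_1 + v_2 + v_3 + v_4 − v_1^{-1}v_2^{-1}v_3v_4. -/

import Mathlib

open MeasureTheory

/-- Evaluation of an integer Laurent polynomial in `d` variables at a point of `ℂᵈ`. -/
noncomputable def lEval {d : ℕ} (f : AddMonoidAlgebra ℤ (Fin d → ℤ)) (s : Fin d → ℂ) : ℂ :=
  Finsupp.sum f.coeff fun n c => (c : ℂ) * ∏ i, s i ^ (n i)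

open Classical in
/-- The Mahler measure of an integer Laurent polynomial in `d` variables:
the exponential of the average of `log |f|` over the `d`-torus; by convention `M(0) = 0`. -/
noncomputable def mahlerMeasure {d : ℕ} (f : AddMonoidAlgebra ℤ (Fin d → ℤ)) : ℝ :=
  if f = 0 then 0 else
    Real.exp (∫ t in Set.pi Set.univ (fun _ : Fin d => Set.Icc (0:ℝ) 1),
      Real.log ‖lEval f (fun i => Complex.exp (2 * (Real.pi : ℂ) * Complex.I * (t i : ℂ)))‖)

/-- The variable `u_i`, as a Laurent polynomial. -/
noncomputable def U {d : ℕ} (i : Fin d) : AddMonoidAlgebra ℤ (Fin d → ℤ) :=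
  AddMonoidAlgebra.single (Pi.single i (1:ℤ)) 1

/-- The inverse variable `u_i⁻¹`, as a Laurent polynomial. -/
noncomputable def Uinv {d : ℕ} (i : Fin d) : AddMonoidAlgebra ℤ (Fin d → ℤ) :=
  AddMonoidAlgebra.single (Pi.single i (-1:ℤ)) 1

noncomputable def ee (t : ℝ) : ℂ := Complex.exp (2 * (Real.pi : ℂ) * Complex.I * (t : ℂ))

lemma ee_add (s t : ℝ) : ee (s + t) = ee s * ee t := by
  simp only [ee, ← Complex.exp_add]; push_cast; ring_nf

lemma ee_ne_zero (t : ℝ) : ee t ≠ 0 := Complex.exp_ne_zero _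

lemma ee_zero : ee 0 = 1 := by simp [ee]

lemma ee_neg (t : ℝ) : ee (-t) = (ee t)⁻¹ :=
  eq_inv_of_mul_eq_one_left (by rw [← ee_add]; simp [ee_zero])

lemma ee_int (n : ℤ) : ee n = 1 := by
  rw [ee, show (2 * (Real.pi:ℂ) * Complex.I * ((n:ℝ):ℂ)) = (n:ℂ) * (2 * Real.pi * Complex.I) by
    push_cast; ring]
  exact Complex.exp_int_mul_two_pi_mul_I n

lemma ee_half : ee (1/2) = -1 := by
  rw [ee, show (2 * (Real.pi:ℂ) * Complex.I * (((1:ℝ)/2:ℝ):ℂ)) = Real.pi * Complex.I by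
    push_cast; ring]
  exact Complex.exp_pi_mul_I

lemma abs_ee (t : ℝ) : ‖ee t‖ = 1 := by
  rw [ee, show (2 * (Real.pi:ℂ) * Complex.I * ((t:ℝ):ℂ)) = ((2 * Real.pi * t : ℝ) : ℂ) * Complex.I by
    push_cast; ring]
  exact Complex.norm_exp_ofReal_mul_I _

noncomputable def evalHom {d : ℕ} (s : Fin d → ℂ) (hs : ∀ i, s i ≠ 0) :
    AddMonoidAlgebra ℤ (Fin d → ℤ) →ₐ[ℤ] ℂ :=
  AddMonoidAlgebra.lift ℤ ℂ (Fin d → ℤ)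
    { toFun := fun n => ∏ i, s i ^ (Multiplicative.toAdd n i)
      map_one' := by simp
      map_mul' := fun n m => by
        show (∏ i, s i ^ (Multiplicative.toAdd n i + Multiplicative.toAdd m i)) = _
        rw [← Finset.prod_mul_distrib]
        exact Finset.prod_congr rfl fun i _ => zpow_add₀ (hs i) _ _ }

lemma lEval_eq_evalHom {d : ℕ} (f : AddMonoidAlgebra ℤ (Fin d → ℤ)) (s : Fin d → ℂ)
    (hs : ∀ i, s i ≠ 0) : lEval f s = evalHom s hs f := by
  rw [evalHom, AddMonoidAlgebra.lift_apply, lEval]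
  refine Finsupp.sum_congr fun n _ => ?_
  simp only [MonoidHom.coe_mk, OneHom.coe_mk, toAdd_ofAdd, zsmul_eq_mul]

lemma evalHom_U {d : ℕ} (s : Fin d → ℂ) (hs : ∀ i, s i ≠ 0) (i : Fin d) :
    evalHom s hs (U i) = s i := by
  rw [U, evalHom, AddMonoidAlgebra.lift_apply]
  rw [AddMonoidAlgebra.coeff_single, Finsupp.sum_single_index (by rw [zero_smul]), one_smul]
  simp only [MonoidHom.coe_mk, OneHom.coe_mk, toAdd_ofAdd]
  rw [Finset.prod_eq_single i (fun j _ hj => by rw [Pi.single_eq_of_ne hj, zpow_zero])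
    (fun h => absurd (Finset.mem_univ i) h)]
  rw [Pi.single_eq_same, zpow_one]

lemma evalHom_Uinv {d : ℕ} (s : Fin d → ℂ) (hs : ∀ i, s i ≠ 0) (i : Fin d) :
    evalHom s hs (Uinv i) = (s i)⁻¹ := by
  rw [Uinv, evalHom, AddMonoidAlgebra.lift_apply]
  rw [AddMonoidAlgebra.coeff_single, Finsupp.sum_single_index (by rw [zero_smul]), one_smul]
  simp only [MonoidHom.coe_mk, OneHom.coe_mk, toAdd_ofAdd]
  rw [Finset.prod_eq_single i (fun j _ hj => by rw [Pi.single_eq_of_ne hj, zpow_zero])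
    (fun h => absurd (Finset.mem_univ i) h)]
  rw [Pi.single_eq_same, zpow_neg, zpow_one]

lemma lEval_P {s : Fin 4 → ℂ} (hs : ∀ i, s i ≠ 0) :
    lEval ((U 0 - U 0 * U 2 - U 0 * U 3 - U 1 * U 2 + U 2 * U 3 + U 0 * U 1 * U 2 :
        AddMonoidAlgebra ℤ (Fin 4 → ℤ))) s =
      s 0 - s 0 * s 2 - s 0 * s 3 - s 1 * s 2 + s 2 * s 3 + s 0 * s 1 * s 2 := by
  rw [lEval_eq_evalHom _ _ hs]
  simp only [map_add, map_sub, map_mul, evalHom_U s hs]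

lemma lEval_Q {s : Fin 4 → ℂ} (hs : ∀ i, s i ≠ 0) :
    lEval ((1 + U 0 + U 1 + U 2 + U 3 - Uinv 0 * Uinv 1 * U 2 * U 3 :
        AddMonoidAlgebra ℤ (Fin 4 → ℤ))) s =
      1 + s 0 + s 1 + s 2 + s 3 - (s 0)⁻¹ * (s 1)⁻¹ * s 2 * s 3 := by
  rw [lEval_eq_evalHom _ _ hs]
  simp only [map_add, map_sub, map_mul, map_one, evalHom_U s hs, evalHom_Uinv s hs]

lemma P_ne_zero :
    ((U 0 - U 0 * U 2 - U 0 * U 3 - U 1 * U 2 + U 2 * U 3 + U 0 * U 1 * U 2 :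
        AddMonoidAlgebra ℤ (Fin 4 → ℤ))) ≠ 0 := by
  intro h
  have hs : ∀ i, (![2, 1, 1, -1] : Fin 4 → ℂ) i ≠ 0 := by
    intro i; fin_cases i <;> norm_num
  have := lEval_P hs
  rw [h] at this
  simp only [lEval, AddMonoidAlgebra.coeff_zero, Finsupp.sum_zero_index] at this
  norm_num [Matrix.cons_val_zero, Matrix.cons_val_one, Matrix.cons_val_two, Matrix.cons_val_three, Matrix.vecHead, Matrix.vecTail] at this

lemma Q_ne_zero :
    ((1 + U 0 + U 1 + U 2 + U 3 - Uinv 0 * Uinv 1 * U 2 * U 3 :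
        AddMonoidAlgebra ℤ (Fin 4 → ℤ))) ≠ 0 := by
  intro h
  have hs : ∀ i, (fun _ => (1:ℂ) : Fin 4 → ℂ) i ≠ 0 := fun i => one_ne_zero
  have := lEval_Q hs
  rw [h] at this
  simp only [lEval, AddMonoidAlgebra.coeff_zero, Finsupp.sum_zero_index] at this
  norm_num at this

def Amat : Matrix (Fin 4) (Fin 4) ℤ := !![0,0,1,0; 0,0,0,1; 0,1,1,0; -1,0,1,1]
def Bmat : Matrix (Fin 4) (Fin 4) ℤ := !![1,1,0,-1; -1,0,1,0; 1,0,0,0; 0,1,0,0]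

lemma AmatBmat : Amat * Bmat = 1 := by decide
lemma BmatAmat : Bmat * Amat = 1 := by decide
lemma detAmat : Amat.det = 1 := by decide

noncomputable def Mr : Matrix (Fin 4) (Fin 4) ℝ := Amat.map (Int.castRingHom ℝ)
noncomputable def Br : Matrix (Fin 4) (Fin 4) ℝ := Bmat.map (Int.castRingHom ℝ)

lemma MrBr : Mr * Br = 1 := by
  rw [Mr, Br, ← Matrix.map_mul, AmatBmat, Matrix.map_one _ (map_zero _) (map_one _)]
lemma BrMr : Br * Mr = 1 := by
  rw [Mr, Br, ← Matrix.map_mul, BmatAmat, Matrix.map_one _ (map_zero _) (map_one _)]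

lemma detMr : Mr.det = 1 := by
  have : Amat.map (Int.castRingHom ℝ) = (Int.castRingHom ℝ).mapMatrix Amat := rfl
  rw [Mr, this, ← RingHom.map_det, detAmat, map_one]

noncomputable def invMr : Invertible Mr := ⟨Br, BrMr, MrBr⟩

noncomputable def Lq : (Fin 4 → ℝ) ≃ₗ[ℝ] (Fin 4 → ℝ) := Mr.toLinearEquiv' invMr

noncomputable def cvec : Fin 4 → ℝ := ![1/2, 1/2, 0, 0]

noncomputable def Tmap (x : Fin 4 → ℝ) : Fin 4 → ℝ := cvec + Matrix.toLin' Mr x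

lemma measurePreserving_L : MeasurePreserving (Matrix.toLin' Mr)
    (volume : Measure (Fin 4 → ℝ)) volume := by
  refine ⟨(LinearMap.continuous_on_pi _).measurable, ?_⟩
  rw [Real.map_matrix_volume_pi_eq_smul_volume_pi (by rw [detMr]; norm_num)]
  rw [detMr]
  norm_num

lemma measurePreserving_T : MeasurePreserving Tmap (volume : Measure (Fin 4 → ℝ)) volume :=
  (measurePreserving_add_left volume cvec).comp measurePreserving_L

noncomputable def Thomeo : Homeomorph (Fin 4 → ℝ) (Fin 4 → ℝ) :=
  (LinearEquiv.toContinuousLinearEquiv Lq).toHomeomorph.trans (Homeomorph.addLeft cvec)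

lemma Thomeo_eq : ⇑Thomeo = Tmap := rfl

lemma measurableEmbedding_T : MeasurableEmbedding Tmap :=
  Thomeo_eq ▸ Thomeo.measurableEmbedding

noncomputable def bb : Module.Basis (Fin 4) ℝ (Fin 4 → ℝ) := Pi.basisFun ℝ (Fin 4)
noncomputable def bb2 : Module.Basis (Fin 4) ℝ (Fin 4 → ℝ) := bb.map Lq
noncomputable def Lam : Submodule ℤ (Fin 4 → ℝ) := Submodule.span ℤ (Set.range bb)

lemma mem_Lam_iff (x : Fin 4 → ℝ) : x ∈ Lam ↔ ∀ i, ∃ n : ℤ, (n : ℝ) = x i := by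
  rw [Lam, Module.Basis.mem_span_iff_repr_mem]
  refine forall_congr' fun i => ?_
  rw [bb, Pi.basisFun_repr]
  rfl

lemma span_bb2 : Submodule.span ℤ (Set.range bb2) = Lam := by
  refine le_antisymm (Submodule.span_le.2 ?_) (Submodule.span_le.2 ?_)
  · rintro _ ⟨i, rfl⟩
    rw [SetLike.mem_coe, mem_Lam_iff]
    intro j
    refine ⟨Amat j i, ?_⟩
    rw [bb2, Module.Basis.map_apply, bb, Pi.basisFun_apply]
    show (Amat j i : ℝ) = Matrix.toLin' Mr (Pi.single i 1) j
    rw [Matrix.toLin'_apply, Matrix.mulVec_single]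
    show (Amat j i : ℝ) = Mr j i * 1
    rw [mul_one, Mr]
    rfl
  · rintro _ ⟨i, rfl⟩
    rw [SetLike.mem_coe, Module.Basis.mem_span_iff_repr_mem]
    intro j
    refine ⟨Bmat j i, ?_⟩
    rw [bb2]
    show (Bmat j i : ℝ) = bb.repr (Lq.symm (bb i)) j
    rw [bb, Pi.basisFun_repr, Pi.basisFun_apply]
    show (Bmat j i : ℝ) = Matrix.toLin' Br (Pi.single i 1) j
    rw [Matrix.toLin'_apply, Matrix.mulVec_single]
    show (Bmat j i : ℝ) = Br j i * 1
    rw [mul_one, Br]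
    rfl

lemma fd_bb_eq : ZSpan.fundamentalDomain bb = Set.pi Set.univ (fun _ : Fin 4 => Set.Ico (0:ℝ) 1) :=
  ZSpan.fundamentalDomain_pi_basisFun

lemma FD1 : IsAddFundamentalDomain Lam (ZSpan.fundamentalDomain bb) volume :=
  ZSpan.isAddFundamentalDomain bb volume

lemma FD2 : IsAddFundamentalDomain Lam (ZSpan.fundamentalDomain bb2) volume :=
  span_bb2 ▸ ZSpan.isAddFundamentalDomain bb2 volume

open Pointwise in
instance : VAddCommClass (Fin 4 → ℝ) (↥Lam) (Fin 4 → ℝ) :=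
  ⟨fun a b x => by show a + (↑b + x) = ↑b + (a + x); rw [add_left_comm]⟩

open Pointwise in
lemma FD3 : IsAddFundamentalDomain Lam (cvec +ᵥ ZSpan.fundamentalDomain bb2) volume :=
  FD2.vadd_of_comm cvec

lemma image_L : (Matrix.toLin' Mr) '' (ZSpan.fundamentalDomain bb) = ZSpan.fundamentalDomain bb2 := by
  ext x
  rw [Set.mem_image]
  constructor
  · rintro ⟨y, hy, rfl⟩
    rw [ZSpan.mem_fundamentalDomain _]
    intro i
    have h2 : bb2.repr (Matrix.toLin' Mr y) i = bb.repr y i := by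
      show bb.repr (Lq.symm (Lq y)) i = bb.repr y i
      rw [LinearEquiv.symm_apply_apply]
    rw [h2]
    exact ((ZSpan.mem_fundamentalDomain _).1 hy) i
  · intro hx
    refine ⟨Lq.symm x, ?_, by rw [show (Matrix.toLin' Mr) (Lq.symm x) = Lq (Lq.symm x) from rfl,
      LinearEquiv.apply_symm_apply]⟩
    rw [ZSpan.mem_fundamentalDomain _]
    intro i
    exact ((ZSpan.mem_fundamentalDomain _).1 hx) i

open Pointwise in
lemma image_T : Tmap '' (ZSpan.fundamentalDomain bb) = cvec +ᵥ ZSpan.fundamentalDomain bb2 := by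
  have h : Tmap = (fun y => cvec +ᵥ y) ∘ (Matrix.toLin' Mr) := rfl
  rw [h, Set.image_comp, image_L, Set.image_vadd]

lemma cube_ae : (Set.pi Set.univ fun _ : Fin 4 => Set.Ico (0:ℝ) 1)
    =ᵐ[volume] (Set.pi Set.univ fun _ : Fin 4 => Set.Icc (0:ℝ) 1) := by
  refine ae_eq_of_subset_of_measure_ge
    (Set.pi_mono fun i _ => Set.Ico_subset_Icc_self) (le_of_eq ?_)
    ((MeasurableSet.univ_pi fun _ => measurableSet_Ico).nullMeasurableSet) ?_
  · rw [volume_pi_pi, volume_pi_pi]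
    simp [Real.volume_Ico, Real.volume_Icc]
  · rw [volume_pi_pi]
    simp [Real.volume_Icc]

instance : MeasurableVAdd (↥Lam) (Fin 4 → ℝ) :=
  MeasurableVAdd.mk (toMeasurableConstVAdd := ⟨fun c => by
      have : (fun x : Fin 4 → ℝ => c +ᵥ x) = fun x => (c : Fin 4 → ℝ) + x := rfl
      rw [this]; exact measurable_id.const_add _⟩)
   (measurable_vadd_const := fun x => by
      have : (fun c : ↥Lam => c +ᵥ x) = fun c : ↥Lam => (c : Fin 4 → ℝ) + x := rfl
      rw [this]; exact (measurable_subtype_coe).add_const _)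

instance : VAddInvariantMeasure (↥Lam) (Fin 4 → ℝ) volume :=
  ⟨fun c s hs => by
    show volume ((fun x => (c : Fin 4 → ℝ) + x) ⁻¹' s) = volume s
    exact measure_preimage_add volume _ s⟩

instance : Countable ↥Lam :=
  inferInstanceAs (Countable (Submodule.span ℤ (Set.range ⇑bb)))

lemma key_integral (H : (Fin 4 → ℝ) → ℝ)
    (hH : ∀ g : Fin 4 → ℝ, g ∈ Lam → ∀ x, H (g + x) = H x) :
    ∫ x in Set.pi Set.univ (fun _ : Fin 4 => Set.Icc (0:ℝ) 1), H (Tmap x)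
      = ∫ x in Set.pi Set.univ (fun _ : Fin 4 => Set.Icc (0:ℝ) 1), H x := by
  have hH' : ∀ (g : ↥Lam) (x : Fin 4 → ℝ), H (g +ᵥ x) = H x := fun g x => hH g g.2 x
  calc ∫ x in Set.pi Set.univ (fun _ : Fin 4 => Set.Icc (0:ℝ) 1), H (Tmap x)
      = ∫ x in ZSpan.fundamentalDomain bb, H (Tmap x) := by
        rw [fd_bb_eq]; exact (setIntegral_congr_set cube_ae).symm
    _ = ∫ y in Tmap '' ZSpan.fundamentalDomain bb, H y :=
        (measurePreserving_T.setIntegral_image_emb measurableEmbedding_T H _).symm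
    _ = ∫ y in ZSpan.fundamentalDomain bb, H y := by
        rw [image_T]; exact FD3.setIntegral_eq FD1 hH'
    _ = ∫ x in Set.pi Set.univ (fun _ : Fin 4 => Set.Icc (0:ℝ) 1), H x := by
        rw [fd_bb_eq]; exact setIntegral_congr_set cube_ae


noncomputable def Hfun (x : Fin 4 → ℝ) : ℝ :=
  Real.log ‖lEval ((1 + U 0 + U 1 + U 2 + U 3 - Uinv 0 * Uinv 1 * U 2 * U 3 :
    AddMonoidAlgebra ℤ (Fin 4 → ℤ))) (fun i => ee (x i))‖

lemma Hfun_periodic : ∀ g : Fin 4 → ℝ, g ∈ Lam → ∀ x, Hfun (g + x) = Hfun x := by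
  intro g hg x
  have h : (fun i => ee ((g + x) i)) = fun i => ee (x i) := by
    funext i
    obtain ⟨n, hn⟩ := (mem_Lam_iff g).1 hg i
    show ee (g i + x i) = ee (x i)
    rw [← hn, ee_add, ee_int, one_mul]
  rw [Hfun, Hfun, h]

lemma Tmap_apply (t : Fin 4 → ℝ) :
    Tmap t = ![1/2 + t 2, 1/2 + t 3, t 1 + t 2, -(t 0) + (t 2 + t 3)] := by
  funext i
  fin_cases i <;>
    simp [Tmap, cvec, Mr, Amat, Matrix.toLin'_apply, Matrix.mulVec, dotProduct,
      Fin.sum_univ_four] <;> ring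

lemma pointwise_key (t : Fin 4 → ℝ) :
    Real.log ‖lEval
        ((U 0 - U 0 * U 2 - U 0 * U 3 - U 1 * U 2 + U 2 * U 3 + U 0 * U 1 * U 2 :
          AddMonoidAlgebra ℤ (Fin 4 → ℤ))) (fun i => ee (t i))‖ = Hfun (Tmap t) := by
  have hs : ∀ i, (fun i => ee (t i)) i ≠ 0 := fun i => ee_ne_zero _
  have hw : ∀ i, (fun i => ee (Tmap t i)) i ≠ 0 := fun i => ee_ne_zero _
  rw [Hfun, lEval_P hs, lEval_Q hw]
  have e0 : ee (Tmap t 0) = -ee (t 2) := by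
    rw [Tmap_apply]; show ee (1/2 + t 2) = _; rw [ee_add, ee_half, neg_one_mul]
  have e1 : ee (Tmap t 1) = -ee (t 3) := by
    rw [Tmap_apply]; show ee (1/2 + t 3) = _; rw [ee_add, ee_half, neg_one_mul]
  have e2 : ee (Tmap t 2) = ee (t 1) * ee (t 2) := by
    rw [Tmap_apply]; show ee (t 1 + t 2) = _; rw [ee_add]
  have e3 : ee (Tmap t 3) = (ee (t 0))⁻¹ * (ee (t 2) * ee (t 3)) := by
    rw [Tmap_apply]; show ee (-(t 0) + (t 2 + t 3)) = _; rw [ee_add, ee_neg, ee_add]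
  rw [e0, e1, e2, e3]
  set a := ee (t 0); set b := ee (t 1); set c := ee (t 2); set d := ee (t 3)
  have ha : a ≠ 0 := ee_ne_zero _
  have hb : b ≠ 0 := ee_ne_zero _
  have hc : c ≠ 0 := ee_ne_zero _
  have hd : d ≠ 0 := ee_ne_zero _
  have key : a - a * c - a * d - b * c + c * d + a * b * c =
      a * (1 + -c + -d + b * c + a⁻¹ * (c * d) - (-c)⁻¹ * (-d)⁻¹ * (b * c) * (a⁻¹ * (c * d))) := by
    field_simp
    ring
  rw [key, norm_mul, abs_ee, one_mul]

/-- **Example 5.5 (pretzel link `l(2,−2,2,−2,2)`).**  The Mahler measure of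
`u_1 − u_1u_3 − u_1u_4 − u_2u_3 + u_3u_4 + u_1u_2u_3` equals the Mahler measure of
`1 + v_1 + v_2 + v_3 + v_4 − v_1⁻¹v_2⁻¹v_3v_4`. -/
theorem mahler_pretzel_factor :
    mahlerMeasure ((U 0 - U 0 * U 2 - U 0 * U 3 - U 1 * U 2 + U 2 * U 3 + U 0 * U 1 * U 2 :
        AddMonoidAlgebra ℤ (Fin 4 → ℤ))) =
    mahlerMeasure ((1 + U 0 + U 1 + U 2 + U 3 - Uinv 0 * Uinv 1 * U 2 * U 3 :
        AddMonoidAlgebra ℤ (Fin 4 → ℤ))) := by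
  rw [mahlerMeasure, mahlerMeasure, if_neg P_ne_zero, if_neg Q_ne_zero]
  congr 1
  calc (∫ t in Set.pi Set.univ (fun _ : Fin 4 => Set.Icc (0:ℝ) 1),
        Real.log ‖lEval
          ((U 0 - U 0 * U 2 - U 0 * U 3 - U 1 * U 2 + U 2 * U 3 + U 0 * U 1 * U 2 :
            AddMonoidAlgebra ℤ (Fin 4 → ℤ)))
          (fun i => Complex.exp (2 * (Real.pi : ℂ) * Complex.I * (t i : ℂ)))‖)
      = ∫ t in Set.pi Set.univ (fun _ : Fin 4 => Set.Icc (0:ℝ) 1), Hfun (Tmap t) :=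
        integral_congr_ae (Filter.Eventually.of_forall fun t => pointwise_key t)
    _ = ∫ t in Set.pi Set.univ (fun _ : Fin 4 => Set.Icc (0:ℝ) 1), Hfun t :=
        key_integral Hfun Hfun_periodic
    _ = _ := rfl
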